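/- With the same setup, Π₀ is the unique projection from V onto K satisfying Π₀ (ι⁻¹E)⁻¹ Π₁^V = 0: that is, if P is any projection on V with range K satisfying Π₀^V(ι⁻¹E)P' = 0 where P' = I − P (equivalently P (ι⁻¹E)⁻¹Π₁^V = 0), then P = (E^{00})⁻¹ Π₀^V ι⁻¹ E. -/

import Mathlib

/- STATEMENT 4: Uniqueness: if P is any projection on V with range K satisfying
Π₀^V (ι⁻¹E) (I − P) = 0, then P = Π₀ = (E^{00})⁻¹ Π₀^V ι⁻¹ E.  (As before, E : V → V*
coercive is identified via the Riesz map with the operator ι⁻¹E : V →L[ℂ] V,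
which is invertible by coercivity; E^{00} : K → K invertible with inverse B.) -/

local notation "⟪" x ", " y "⟫" => @inner ℂ _ _ x y

noncomputable def Ezz {V : Type*} [NormedAddCommGroup V] [InnerProductSpace ℂ V]
    [CompleteSpace V] (K : Submodule ℂ V) [CompleteSpace K] (E : V →L[ℂ] V) : K →L[ℂ] K :=
  (K.orthogonalProjection).comp (E.comp K.subtypeL)

noncomputable def Pi0 {V : Type*} [NormedAddCommGroup V] [InnerProductSpace ℂ V]
    [CompleteSpace V] (K : Submodule ℂ V) [CompleteSpace K] (E : V →L[ℂ] V)
    (B : K →L[ℂ] K) : V →L[ℂ] V :=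
  K.subtypeL.comp (B.comp ((K.orthogonalProjection).comp E))

theorem stmt4
    {V : Type*} [NormedAddCommGroup V] [InnerProductSpace ℂ V] [CompleteSpace V]
    (K : Submodule ℂ V) [CompleteSpace K]
    (E : V →L[ℂ] V) (c : ℝ) (hc : 0 < c)
    (hcoer : ∀ v : V, c * ‖v‖ ^ 2 ≤ (⟪E v, v⟫).re)
    (B : K →L[ℂ] K)
    (hB1 : B.comp (Ezz K E) = ContinuousLinearMap.id ℂ K)
    (hB2 : (Ezz K E).comp B = ContinuousLinearMap.id ℂ K)
    (P : V →L[ℂ] V)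
    (hPproj : P.comp P = P)
    (hPrange : ∀ v : V, P v ∈ K)
    (hPid : ∀ x : V, x ∈ K → P x = x)
    (hPcond : ∀ v : V, K.orthogonalProjection (E (v - P v)) = 0) :
    P = Pi0 K E B := by
  ext v
  have h1 : K.orthogonalProjection (E v) = K.orthogonalProjection (E (P v)) := by
    have := hPcond v
    rw [map_sub, map_sub, sub_eq_zero] at this
    exact this
  have h2 : Ezz K E ⟨P v, hPrange v⟩ = K.orthogonalProjection (E (P v)) := rfl
  have h3 : B (K.orthogonalProjection (E v)) = ⟨P v, hPrange v⟩ := by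
    rw [h1, ← h2, ← ContinuousLinearMap.comp_apply, hB1]; rfl
  show P v = Pi0 K E B v
  have : Pi0 K E B v = (B (K.orthogonalProjection (E v)) : V) := rfl
  rw [this, h3]
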